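/- Let L̄ ∈ ℝ^{m×m} satisfy L̄Σ + ΣL̄ᵀ = I with Σ symmetric positive definite. Then for every eigenvalue λ of L̄: λ_min((1/2)Σ^{-1}) ≤ Re(λ) ≤ λ_max((1/2)Σ^{-1}). -/

import Mathlib

open Matrix

lemma aux_rayleigh_bounds {n : Type*} [Fintype n] [DecidableEq n] [Nonempty n]
    {H : Matrix n n ℝ} (hH : H.IsHermitian) (y : n → ℝ) :
    (⨅ i, hH.eigenvalues i) * (y ⬝ᵥ y) ≤ y ⬝ᵥ H *ᵥ y ∧
      y ⬝ᵥ H *ᵥ y ≤ (⨆ i, hH.eigenvalues i) * (y ⬝ᵥ y) := by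
  set U : Matrix n n ℝ := (hH.eigenvectorUnitary : Matrix n n ℝ) with hU
  set d : n → ℝ := hH.eigenvalues with hd
  have hUU : star U * U = 1 := Unitary.coe_star_mul_self _
  have hUU' : U * star U = 1 := Unitary.coe_mul_star_self _
  set z : n → ℝ := star U *ᵥ y with hz
  have hyz : U *ᵥ z = y := by
    rw [hz, mulVec_mulVec, hUU', one_mulVec]
  have hstar : star U = Uᵀ := by
    rw [star_eq_conjTranspose, conjTranspose_eq_transpose_of_trivial]
  have hyy : y ⬝ᵥ y = z ⬝ᵥ z := by
    conv_lhs => rw [← hyz]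
    rw [dotProduct_mulVec, ← mulVec_transpose, ← hstar, hz, mulVec_mulVec, hUU, one_mulVec]
  have hyHy : y ⬝ᵥ H *ᵥ y = ∑ i, d i * z i ^ 2 := by
    conv_lhs => rw [hH.spectral_theorem]
    rw [Unitary.conjStarAlgAut_apply, RCLike.ofReal_real_eq_id]
    rw [← mulVec_mulVec, ← mulVec_mulVec, dotProduct_mulVec, ← mulVec_transpose, ← hstar, ← hz]
    simp only [dotProduct, mulVec_diagonal, Function.comp_apply, id_eq]
    apply Finset.sum_congr rfl
    intro i _
    ring
  have hbddB : BddBelow (Set.range d) := Set.Finite.bddBelow (Set.finite_range d)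
  have hbddA : BddAbove (Set.range d) := Set.Finite.bddAbove (Set.finite_range d)
  constructor
  · rw [hyy, hyHy, dotProduct, Finset.mul_sum]
    apply Finset.sum_le_sum
    intro i _
    have h1 : (⨅ j, d j) ≤ d i := ciInf_le hbddB i
    have h2 : z i * z i = z i ^ 2 := by ring
    rw [h2]
    exact mul_le_mul_of_nonneg_right h1 (sq_nonneg _)
  · rw [hyy, hyHy, dotProduct, Finset.mul_sum]
    apply Finset.sum_le_sum
    intro i _
    have h1 : d i ≤ ⨆ j, d j := le_ciSup hbddA i
    have h2 : z i * z i = z i ^ 2 := by ring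
    rw [h2]
    exact mul_le_mul_of_nonneg_right h1 (sq_nonneg _)

lemma aux_sqrt_conj_claim {m : ℕ} (S R : Matrix (Fin m) (Fin m) ℝ) (hsym : Sᵀ = S)
    (hRH : Rᵀ = R) (hRR : R * R = S) (hdetS : S.det ≠ 0) (x : Fin m → ℝ) :
    R *ᵥ x ⬝ᵥ R *ᵥ x = x ⬝ᵥ S *ᵥ x ∧
      (R *ᵥ x) ⬝ᵥ (((1 / 2 : ℝ) • S⁻¹) *ᵥ (R *ᵥ x)) = (1 / 2 : ℝ) * (x ⬝ᵥ x) := by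
  have hdetR : IsUnit R.det := by
    have h2 : R.det * R.det = S.det := by rw [← det_mul, hRR]
    refine isUnit_iff_ne_zero.mpr ?_
    intro h; rw [h, mul_zero] at h2; exact hdetS h2.symm
  have hRinv : R * R⁻¹ = 1 := mul_nonsing_inv R hdetR
  have hRinv' : R⁻¹ * R = 1 := nonsing_inv_mul R hdetR
  have hkey : R * ((1 / 2 : ℝ) • S⁻¹) * R = (1 / 2 : ℝ) • 1 := by
    rw [← hRR, Matrix.mul_inv_rev, Matrix.mul_smul, Matrix.smul_mul]
    rw [show R * (R⁻¹ * R⁻¹) * R = (R * R⁻¹) * (R⁻¹ * R) by simp only [Matrix.mul_assoc],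
      hRinv, hRinv', one_mul]
  have hHsym : ((1 / 2 : ℝ) • S⁻¹)ᵀ = (1 / 2 : ℝ) • S⁻¹ := by
    rw [transpose_smul, Matrix.transpose_nonsing_inv, hsym]
  constructor
  · rw [dotProduct_mulVec, ← mulVec_transpose, hRH, mulVec_mulVec, hRR, dotProduct_comm]
  · rw [mulVec_mulVec, dotProduct_mulVec, ← mulVec_transpose, transpose_mul, hHsym, hRH,
      mulVec_mulVec, hkey, smul_mulVec, one_mulVec,
      smul_dotProduct, smul_eq_mul]

/-- If `L̄Σ + ΣL̄ᵀ = I` with `Σ` symmetric positive definite, then the real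
part of every eigenvalue of `L̄` lies between the smallest and largest eigenvalues of the
symmetric matrix `(1/2)Σ⁻¹`. -/
theorem eigenvalue_real_part_bounds {m : ℕ} (hm : 0 < m)
    (L S : Matrix (Fin m) (Fin m) ℝ) (hsym : Sᵀ = S) (hpd : S.PosDef)
    (hS : L * S + S * Lᵀ = 1)
    (hH : ((1 / 2 : ℝ) • S⁻¹).IsHermitian) :
    ∀ μ ∈ spectrum ℂ (L.map (Complex.ofReal)),
      (⨅ i, hH.eigenvalues i) ≤ μ.re ∧ μ.re ≤ (⨆ i, hH.eigenvalues i) := by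
  haveI : Nonempty (Fin m) := Fin.pos_iff_nonempty.mp hm
  intro μ hμ
  -- extract an eigenvector of `Lᵀ`
  obtain ⟨v, hv0, hv⟩ : ∃ v : Fin m → ℂ, v ≠ 0 ∧ (Lᵀ.map (Complex.ofReal)) *ᵥ v = μ • v := by
    rw [spectrum.mem_iff] at hμ
    have halg : (algebraMap ℂ (Matrix (Fin m) (Fin m) ℂ)) μ = μ • 1 :=
      Algebra.algebraMap_eq_smul_one μ
    rw [halg, Matrix.isUnit_iff_isUnit_det, isUnit_iff_ne_zero, not_not] at hμ
    have hdet : (μ • 1 - Lᵀ.map (Complex.ofReal)).det = 0 := by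
      have h1 : (μ • 1 - Lᵀ.map (Complex.ofReal)) = (μ • 1 - L.map (Complex.ofReal))ᵀ := by
        rw [transpose_sub, transpose_smul, transpose_one, transpose_map]
      rw [h1, det_transpose, hμ]
    obtain ⟨w, hw0, hw⟩ := (Matrix.exists_mulVec_eq_zero_iff).mpr hdet
    refine ⟨w, hw0, ?_⟩
    rw [sub_mulVec, smul_mulVec, one_mulVec, sub_eq_zero] at hw
    exact hw.symm
  set a : Fin m → ℝ := fun i => (v i).re with ha
  set b : Fin m → ℝ := fun i => (v i).im with hb
  -- real and imaginary parts of the eigenvalue equation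
  have hvecre : Lᵀ *ᵥ a = μ.re • a - μ.im • b := by
    funext i
    have h := congrFun hv i
    have hre := congrArg Complex.re h
    simp only [mulVec, dotProduct, map_apply, Pi.smul_apply, smul_eq_mul, Complex.re_sum,
      Complex.mul_re, Complex.ofReal_re, Complex.ofReal_im, zero_mul, sub_zero] at hre
    simpa [mulVec, dotProduct, ha, hb] using hre
  have hvecim : Lᵀ *ᵥ b = μ.re • b + μ.im • a := by
    funext i
    have h := congrFun hv i
    have him := congrArg Complex.im h
    simp only [mulVec, dotProduct, map_apply, Pi.smul_apply, smul_eq_mul, Complex.im_sum,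
      Complex.mul_im, Complex.ofReal_re, Complex.ofReal_im, zero_mul, add_zero] at him
    simpa [mulVec, dotProduct, ha, hb] using him
  -- general scalar identity from the Lyapunov equation
  have hgen : ∀ x : Fin m → ℝ, x ⬝ᵥ x = 2 * (x ⬝ᵥ (S *ᵥ (Lᵀ *ᵥ x))) := by
    intro x
    have h1 : x ⬝ᵥ ((L * S + S * Lᵀ) *ᵥ x) = x ⬝ᵥ x := by rw [hS, one_mulVec]
    have h2 : x ⬝ᵥ ((L * S) *ᵥ x) = x ⬝ᵥ ((S * Lᵀ) *ᵥ x) := by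
      rw [dotProduct_mulVec, ← mulVec_transpose, transpose_mul, hsym, dotProduct_comm]
    rw [add_mulVec, dotProduct_add, h2] at h1
    rw [mulVec_mulVec, ← h1]; ring
  have hSab : a ⬝ᵥ S *ᵥ b = b ⬝ᵥ S *ᵥ a := by
    rw [dotProduct_mulVec, ← mulVec_transpose, hsym, dotProduct_comm]
  have haa : a ⬝ᵥ a = 2 * (μ.re * (a ⬝ᵥ S *ᵥ a) - μ.im * (a ⬝ᵥ S *ᵥ b)) := by
    rw [hgen a, hvecre, mulVec_sub, mulVec_smul, mulVec_smul, dotProduct_sub,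
      dotProduct_smul, dotProduct_smul, smul_eq_mul, smul_eq_mul]
  have hbb : b ⬝ᵥ b = 2 * (μ.re * (b ⬝ᵥ S *ᵥ b) + μ.im * (b ⬝ᵥ S *ᵥ a)) := by
    rw [hgen b, hvecim, mulVec_add, mulVec_smul, mulVec_smul, dotProduct_add,
      dotProduct_smul, dotProduct_smul, smul_eq_mul, smul_eq_mul]
  have key : a ⬝ᵥ a + b ⬝ᵥ b = 2 * μ.re * (a ⬝ᵥ S *ᵥ a + b ⬝ᵥ S *ᵥ b) := by
    rw [haa, hbb, hSab]; ring
  -- positivity of the quadratic form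
  have hSnn : ∀ x : Fin m → ℝ, 0 ≤ x ⬝ᵥ S *ᵥ x := by
    intro x
    simpa using hpd.posSemidef.re_dotProduct_nonneg x
  have hSpos : ∀ x : Fin m → ℝ, x ≠ 0 → 0 < x ⬝ᵥ S *ᵥ x := by
    intro x hx
    simpa using hpd.re_dotProduct_pos hx
  have hab : a ≠ 0 ∨ b ≠ 0 := by
    by_contra h
    push_neg at h
    apply hv0
    funext i
    have h1 := congrFun h.1 i
    have h2 := congrFun h.2 i
    simp only [ha, hb, Pi.zero_apply] at h1 h2
    exact Complex.ext h1 h2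
  set q : ℝ := a ⬝ᵥ S *ᵥ a + b ⬝ᵥ S *ᵥ b with hq
  have hqpos : 0 < q := by
    rcases hab with h | h
    · exact add_pos_of_pos_of_nonneg (hSpos a h) (hSnn b)
    · exact add_pos_of_nonneg_of_pos (hSnn a) (hSpos b h)
  -- per-vector eigenvalue bounds
  have hdetS : S.det ≠ 0 := ne_of_gt hpd.det_pos
  set R : Matrix (Fin m) (Fin m) ℝ := cfc Real.sqrt S with hR
  have hRH : Rᵀ = R := by
    rw [← conjTranspose_eq_transpose_of_trivial]
    exact cfc_predicate Real.sqrt S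
  have hRR : R * R = S := by
    rw [hR, ← cfc_mul Real.sqrt Real.sqrt S]
    conv_rhs => rw [← cfc_id' ℝ S]
    apply cfc_congr
    intro x hx
    rw [hpd.posSemidef.1.spectrum_real_eq_range_eigenvalues] at hx
    obtain ⟨i, rfl⟩ := hx
    exact Real.mul_self_sqrt (hpd.posSemidef.eigenvalues_nonneg i)
  have claim : ∀ x : Fin m → ℝ,
      (⨅ i, hH.eigenvalues i) * (x ⬝ᵥ S *ᵥ x) ≤ (1 / 2 : ℝ) * (x ⬝ᵥ x) ∧
        (1 / 2 : ℝ) * (x ⬝ᵥ x) ≤ (⨆ i, hH.eigenvalues i) * (x ⬝ᵥ S *ᵥ x) := by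
    intro x
    obtain ⟨hc1, hc2⟩ := aux_sqrt_conj_claim S R hsym hRH hRR hdetS x
    obtain ⟨hr1, hr2⟩ := aux_rayleigh_bounds hH (R *ᵥ x)
    rw [hc1, hc2] at hr1 hr2
    exact ⟨hr1, hr2⟩
  obtain ⟨hla, _⟩ := claim a
  obtain ⟨hlb, _⟩ := claim b
  obtain ⟨_, hua⟩ := claim a
  obtain ⟨_, hub⟩ := claim b
  constructor
  · have hsum : (⨅ i, hH.eigenvalues i) * q ≤ (1 / 2 : ℝ) * (a ⬝ᵥ a + b ⬝ᵥ b) := by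
      rw [hq, mul_add, mul_add]
      exact add_le_add hla hlb
    rw [key] at hsum
    have : (1 / 2 : ℝ) * (2 * μ.re * q) = μ.re * q := by ring
    rw [this] at hsum
    exact (mul_le_mul_iff_left₀ hqpos).mp hsum
  · have hsum : (1 / 2 : ℝ) * (a ⬝ᵥ a + b ⬝ᵥ b) ≤ (⨆ i, hH.eigenvalues i) * q := by
      rw [hq, mul_add, mul_add]
      exact add_le_add hua hub
    rw [key] at hsum
    have : (1 / 2 : ℝ) * (2 * μ.re * q) = μ.re * q := by ring
    rw [this] at hsum
    exact (mul_le_mul_iff_left₀ hqpos).mp hsum
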